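/- Under the asymmetric random classification noise model, the clean conditional probability can be recovered from the noisy one: P(Y=ŷ|X) = (P(Ŷ=ŷ|X) - ρ₋ŷ)/(1 - ρ₋₁ - ρ₊₁) for ŷ ∈ {+1,-1}, where ρ₋ŷ denotes ρ₋₁ if ŷ=+1 and ρ₊₁ if ŷ=-1. -/

import Mathlib

/-- ρ₋ŷ : equals ρ₋₁ if ŷ = +1 and ρ₊₁ if ŷ = -1. -/
def negRate (ρp ρm : ℝ) (yh : ℤ) : ℝ := if yh = 1 then ρm else ρp

/-- Under asymmetric RCN, P(Y=ŷ|X) = (P(Ŷ=ŷ|X) - ρ₋ŷ)/(1-ρ₋₁-ρ₊₁). -/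
theorem clean_posterior_recovery {X : Type*}
    (pclean pnoisy : ℤ → X → ℝ) (ρp ρm : ℝ)
    (hρp : 0 ≤ ρp) (hρm : 0 ≤ ρm) (hsum : ρp + ρm < 1)
    (hpc : ∀ x, 0 ≤ pclean 1 x ∧ 0 ≤ pclean (-1) x ∧ pclean 1 x + pclean (-1) x = 1)
    (hmodelPos : ∀ x, pnoisy 1 x = (1 - ρp) * pclean 1 x + ρm * pclean (-1) x)
    (hmodelNeg : ∀ x, pnoisy (-1) x = ρp * pclean 1 x + (1 - ρm) * pclean (-1) x) :
    ∀ yh : ℤ, (yh = 1 ∨ yh = -1) → ∀ x,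
      pclean yh x = (pnoisy yh x - negRate ρp ρm yh) / (1 - ρm - ρp) := by
  intro yh hyh x
  have hd : (1 : ℝ) - ρm - ρp ≠ 0 := by linarith
  obtain ⟨h1, h2, h3⟩ := hpc x
  rcases hyh with rfl | rfl
  · have := hmodelPos x
    simp only [negRate, if_pos rfl, if_true]
    field_simp
    nlinarith [this, h3]
  · have := hmodelNeg x
    simp only [negRate]
    norm_num
    field_simp
    nlinarith [this, h3]
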